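/- Let t ≥ 1, d ≥ 1, d' ≥ 1, let 𝒫 be a set of prime numbers with |𝒫| ≥ (t+1) · log₂(d + d'), and let H be the set of all p-th roots of unity for all p ∈ 𝒫. Then H is a hitting set for the set of all polynomials of the form ∑_{j=0}^{t} c_j X^{α_j}(a + bX)^{β_j} with (a, b) ∈ {(0,1), (0,−1)}, α_j ≤ d and β_j ≤ d' for all j, and c_0,…,c_t ∈ ℚ. -/

import Mathlib

open Polynomial

/-- `H` is a hitting set for a set `F` of polynomials over `K` (with points taken in a
`K`-algebra `L`) if every nonzero polynomial of `F` takes a nonzero value at some point of `H`. -/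
def IsHittingSet {K L : Type*} [CommSemiring K] [CommSemiring L] [Algebra K L]
    (H : Set L) (F : Set (Polynomial K)) : Prop :=
  ∀ f ∈ F, f ≠ 0 → ∃ θ ∈ H, Polynomial.aeval θ f ≠ 0

-- aux lemma: per-prime collision
lemma prime_collision (f : ℚ[X]) (hf0 : f ≠ 0) (p : ℕ) (hpp : p.Prime)
    (hv : ∀ θ : ℂ, θ ^ p = 1 → Polynomial.aeval θ f = 0) :
    ∃ e ∈ f.support, e ≠ f.natDegree ∧ e % p = f.natDegree % p := by
  classical
  set e₀ := f.natDegree with he₀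
  set g : ℚ[X] := ∑ e ∈ f.support, C (f.coeff e) * X ^ (e % p) with hg
  have hgz : g = 0 := by
    have hmap : g.map (algebraMap ℚ ℂ) = 0 := by
      apply Polynomial.eq_zero_of_natDegree_lt_card_of_eval_eq_zero' _
        (Polynomial.nthRootsFinset p (1 : ℂ))
      · intro θ hθ
        have hθp : θ ^ p = 1 := (Polynomial.mem_nthRootsFinset hpp.pos (1 : ℂ)).mp hθ
        have h1 : ∀ e : ℕ, θ ^ (e % p) = θ ^ e := by
          intro e
          conv_rhs => rw [← Nat.div_add_mod e p]
          rw [pow_add, pow_mul, hθp, one_pow, one_mul]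
        have hfz := hv θ hθp
        rw [Polynomial.as_sum_support f] at hfz
        simp only [map_sum, aeval_monomial] at hfz
        rw [Polynomial.eval_map, ← Polynomial.aeval_def, hg]
        simp only [map_sum, map_mul, aeval_C, map_pow, aeval_X]
        simp_rw [h1]
        exact hfz
      · have h2 : g.natDegree ≤ p - 1 := by
          apply Polynomial.natDegree_sum_le_of_forall_le
          intro e _
          refine le_trans (Polynomial.natDegree_C_mul_le _ _) ?_
          simpa using Nat.le_sub_one_of_lt (Nat.mod_lt e hpp.pos)
        have h3 : (g.map (algebraMap ℚ ℂ)).natDegree ≤ p - 1 :=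
          le_trans (Polynomial.natDegree_map_le) h2
        rw [IsPrimitiveRoot.card_nthRootsFinset (Complex.isPrimitiveRoot_exp p hpp.ne_zero)]
        have := hpp.pos
        omega
    exact (Polynomial.map_eq_zero_iff (algebraMap ℚ ℂ).injective).mp hmap
  have hc : (∑ e ∈ f.support.filter (fun e => e % p = e₀ % p), f.coeff e) = 0 := by
    have h0 := congrArg (fun q => Polynomial.coeff q (e₀ % p)) hgz
    simp only [hg, Polynomial.finset_sum_coeff, Polynomial.coeff_C_mul,
      Polynomial.coeff_X_pow, Polynomial.coeff_zero, mul_ite, mul_one, mul_zero] at h0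
    rw [Finset.sum_filter]
    calc (∑ e ∈ f.support, if e % p = e₀ % p then f.coeff e else 0)
        = ∑ e ∈ f.support, if e₀ % p = e % p then f.coeff e else 0 :=
          Finset.sum_congr rfl (fun e _ => by simp [eq_comm])
      _ = 0 := h0
  by_contra hcon
  push_neg at hcon
  have he₀mem : e₀ ∈ f.support := Polynomial.natDegree_mem_support_of_nonzero hf0
  have hfilter : f.support.filter (fun e => e % p = e₀ % p) = {e₀} := by
    apply Finset.eq_singleton_iff_unique_mem.mpr
    constructor
    · simp [he₀mem]
    · intro e he
      rw [Finset.mem_filter] at he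
      by_contra hne
      exact hcon e he.1 hne he.2
  rw [hfilter, Finset.sum_singleton] at hc
  exact (Polynomial.mem_support_iff.mp he₀mem) hc

/-- Let `t, d, d' ≥ 1` and let `Ps` be a set of at least `(t+1)·log₂(d+d')` primes. Then the set
of all `p`-th roots of unity for `p ∈ Ps` is a hitting set for the set of polynomials of the
form `∑_{j=0}^{t} c_j X^{α_j}(a + bX)^{β_j}` with `(a,b) ∈ {(0,1), (0,−1)}`, `α_j ≤ d` and
`β_j ≤ d'` for all `j`, and rational coefficients `c_j`. -/
theorem stmt8 (t d d' : ℕ) (ht : 1 ≤ t) (hd : 1 ≤ d) (hd' : 1 ≤ d')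
    (Ps : Finset ℕ) (hprime : ∀ p ∈ Ps, p.Prime)
    (hcard : ((t : ℝ) + 1) * Real.logb 2 ((d : ℝ) + d') ≤ Ps.card) :
    IsHittingSet {θ : ℂ | ∃ p ∈ Ps, θ ^ p = 1}
      {f : ℚ[X] | ∃ (c : Fin (t + 1) → ℚ) (α β : Fin (t + 1) → ℕ) (a b : ℚ),
        ((a, b) = (0, 1) ∨ (a, b) = (0, -1)) ∧
        (∀ j, α j ≤ d) ∧ (∀ j, β j ≤ d') ∧
        f = ∑ j, Polynomial.C (c j) * X ^ α j *
              (Polynomial.C a + Polynomial.C b * X) ^ β j} := by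
  classical
  intro f hf hf0
  by_contra hcon
  push_neg at hcon
  simp only [Set.mem_setOf_eq] at hcon
  have hv : ∀ p ∈ Ps, ∀ θ : ℂ, θ ^ p = 1 → Polynomial.aeval θ f = 0 := by
    intro p hp θ hθ
    exact hcon θ ⟨p, hp, hθ⟩
  obtain ⟨c, α, β, a, b, hab, hα, hβ, hfeq⟩ := hf
  have ha : a = 0 := by rcases hab with h | h <;> simpa using congrArg Prod.fst h
  -- rewrite f as a sum of monomials
  have hfeq' : f = ∑ j, C (c j * b ^ β j) * X ^ (α j + β j) := by
    rw [hfeq]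
    refine Finset.sum_congr rfl fun j _ => ?_
    subst ha
    simp only [map_zero, zero_add, mul_pow, map_mul, map_pow]
    ring
  -- support facts
  have hSsub : f.support ⊆ Finset.image (fun j => α j + β j) Finset.univ := by
    rw [hfeq']
    intro e he
    rw [Polynomial.mem_support_iff] at he
    by_contra hne
    apply he
    rw [Polynomial.finset_sum_coeff]
    apply Finset.sum_eq_zero
    intro j _
    rw [Polynomial.coeff_C_mul, Polynomial.coeff_X_pow]
    have hj : e ≠ α j + β j := fun h => hne (Finset.mem_image.mpr ⟨j, Finset.mem_univ j, h.symm⟩)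
    simp [hj]
  have hSbound : ∀ e ∈ f.support, e ≤ d + d' := by
    intro e he
    obtain ⟨j, _, hj⟩ := Finset.mem_image.mp (hSsub he)
    exact hj ▸ add_le_add (hα j) (hβ j)
  set e₀ := f.natDegree with he₀def
  have he₀mem : e₀ ∈ f.support := Polynomial.natDegree_mem_support_of_nonzero hf0
  have he₀le : e₀ ≤ d + d' := hSbound e₀ he₀mem
  have key : ∀ p ∈ Ps, ∃ e ∈ f.support, e ≠ e₀ ∧ e % p = e₀ % p := fun p hp =>
    prime_collision f hf0 p (hprime p hp) (hv p hp)
  set N : ℕ := ∏ e ∈ f.support.erase e₀, ((e : ℤ) - (e₀ : ℤ)).natAbs with hN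
  have hN0 : N ≠ 0 := by
    rw [hN]
    apply Finset.prod_ne_zero_iff.mpr
    intro e he
    have h1 : e ≠ e₀ := (Finset.mem_erase.mp he).1
    simp only [ne_eq, Int.natAbs_eq_zero, sub_eq_zero]
    exact_mod_cast h1
  have hdvd : (∏ p ∈ Ps, p) ∣ N := by
    apply Finset.prod_primes_dvd
    · intro p hp; exact (hprime p hp).prime
    · intro p hp
      obtain ⟨e, he, hne, hmod⟩ := key p hp
      have hmod' : e₀ ≡ e [MOD p] := (hmod : Nat.ModEq p e e₀).symm
      have h1 : (p : ℤ) ∣ (e : ℤ) - (e₀ : ℤ) := hmod'.dvd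
      have h2 : p ∣ ((e : ℤ) - (e₀ : ℤ)).natAbs := by
        have := Int.natAbs_dvd_natAbs.mpr h1
        simpa using this
      exact h2.trans (Finset.dvd_prod_of_mem _ (Finset.mem_erase.mpr ⟨hne, he⟩))
  have hcardS : (f.support.erase e₀).card ≤ t := by
    have h1 : f.support.card ≤ t + 1 := by
      refine le_trans (Finset.card_le_card hSsub) ?_
      refine le_trans (Finset.card_image_le) ?_
      simp
    have := Finset.card_erase_of_mem he₀mem
    omega
  have hNle : N ≤ (d + d') ^ t := by
    calc N ≤ ∏ _e ∈ f.support.erase e₀, (d + d') := by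
          apply Finset.prod_le_prod'
          intro e he
          have h1 : e ≤ d + d' := hSbound e (Finset.mem_of_mem_erase he)
          omega
      _ = (d + d') ^ (f.support.erase e₀).card := Finset.prod_const _
      _ ≤ (d + d') ^ t := Nat.pow_le_pow_right (by omega) hcardS
  have hM2 : 2 ≤ d + d' := by omega
  have hpow : (d + d') ^ (t + 1) ≤ 2 ^ Ps.card := by
    have hMpos : (0 : ℝ) < (d : ℝ) + d' := by positivity
    have h1 : ((d : ℝ) + d') ^ ((t : ℝ) + 1) ≤ (2 : ℝ) ^ (Ps.card : ℝ) := by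
      calc ((d : ℝ) + d') ^ ((t : ℝ) + 1)
          = ((2 : ℝ) ^ Real.logb 2 ((d : ℝ) + d')) ^ ((t : ℝ) + 1) := by
            rw [Real.rpow_logb (by norm_num) (by norm_num) hMpos]
        _ = (2 : ℝ) ^ (((t : ℝ) + 1) * Real.logb 2 ((d : ℝ) + d')) := by
            rw [← Real.rpow_mul (by norm_num : (0:ℝ) ≤ 2), mul_comm]
        _ ≤ (2 : ℝ) ^ (Ps.card : ℝ) :=
            Real.rpow_le_rpow_of_exponent_le (by norm_num) hcard
    have h2 : (((d + d') ^ (t + 1) : ℕ) : ℝ) ≤ ((2 ^ Ps.card : ℕ) : ℝ) := by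
      push_cast
      rw [← Real.rpow_natCast ((d : ℝ) + d') (t + 1), ← Real.rpow_natCast (2 : ℝ) Ps.card]
      push_cast
      exact h1
    exact_mod_cast h2
  have hprodge : 2 ^ Ps.card ≤ ∏ p ∈ Ps, p := by
    calc 2 ^ Ps.card = ∏ _p ∈ Ps, 2 := (Finset.prod_const 2).symm
      _ ≤ ∏ p ∈ Ps, p := Finset.prod_le_prod' fun p hp => (hprime p hp).two_le
  have hNge : (∏ p ∈ Ps, p) ≤ N := Nat.le_of_dvd (Nat.pos_of_ne_zero hN0) hdvd
  have hfin : (d + d') ^ (t + 1) ≤ (d + d') ^ t :=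
    le_trans hpow (le_trans hprodge (le_trans hNge hNle))
  have hlt : (d + d') ^ t < (d + d') ^ (t + 1) :=
    Nat.pow_lt_pow_right (by omega) (by omega)
  omega
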